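/- Let A be an essential finite arrangement of affine hyperplanes in ℝ^ℓ. Then the number of chambers of A equals π(A,1), i.e. |ch(A)| = Σ_{X∈L(A)} μ(X)(−1)^{r(X)}. -/

import Mathlib

open scoped Classical

noncomputable section

variable (K : Type) [Field K] {V : Type} [AddCommGroup V] [Module K V]

/-- An affine hyperplane in `V`: the level set of a nonzero linear functional. -/
def IsHyperplane (H : Set V) : Prop :=
  ∃ (f : V →ₗ[K] K) (c : K), f ≠ 0 ∧ H = {x | f x = c}

/-- The dimension of a subset of `V`: the dimension of its affine span. -/
def flatDim (X : Set V) : ℕ := Module.finrank K (affineSpan K X).direction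

/-- The intersection poset `L(A)` of the arrangement `A` inside the ambient set `W`:
all nonempty intersections of subfamilies of `A` (intersected with the ambient `W`),
the empty subfamily giving `W` itself. -/
def interPosetIn (W : Set V) (A : Finset (Set V)) : Finset (Set V) :=
  (A.powerset.image fun S => W ∩ ⋂ H ∈ S, H).filter fun X => X.Nonempty

/-- The rank of `X`: its codimension within the ambient space `W`. -/
def rkIn (W X : Set V) : ℕ := flatDim K W - flatDim K X

/-- `μ` satisfies the defining recursion of the Möbius function of the poset
`L(A)` inside the ambient set `W`.  `L(A)` is ordered by reverse inclusion, so the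
condition `μ(W) = 1`, `μ(X) = -∑_{Y < X} μ(Y)` for `X > W` is equivalent to:
for every `X ∈ L(A)`, `∑_{Y ⊇ X} μ(Y)` is `1` if `X = W` and `0` otherwise. -/
def IsMobiusIn (W : Set V) (A : Finset (Set V)) (μ : Set V → ℤ) : Prop :=
  ∀ X ∈ interPosetIn W A,
    (∑ Y ∈ (interPosetIn W A).filter fun Y => X ⊆ Y, μ Y) = if X = W then 1 else 0

/-- The Poincaré polynomial `π(A,t) = ∑_{X ∈ L(A)} μ(X) (-t)^{r(X)}`. -/
def poinIn (W : Set V) (A : Finset (Set V)) (μ : Set V → ℤ) : Polynomial ℤ :=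
  ∑ X ∈ interPosetIn W A, Polynomial.C (μ X) * (- Polynomial.X) ^ (rkIn K W X)

/-- A chamber of the arrangement `A` within the ambient set `W`: a connected
component of `W ∖ ⋃_{H ∈ A} H`. -/
def IsChamberIn [TopologicalSpace V] (W : Set V) (A : Finset (Set V)) (C : Set V) : Prop :=
  ∃ x ∈ W ∩ (⋃ H ∈ A, (H : Set V))ᶜ, C = connectedComponentIn (W ∩ (⋃ H ∈ A, (H : Set V))ᶜ) x

/-- `F` is a generic (transversal) `q`-dimensional affine subspace for the
arrangement `A`: it is (the carrier of) an affine subspace of dimension `q`, and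
for every `X ∈ L(A)`, if `r(X) ≤ q` then `F ∩ X` is nonempty of dimension
`q - r(X)`, and if `r(X) > q` then `F ∩ X = ∅`. -/
def IsGenericFlat (q : ℕ) (A : Finset (Set V)) (F : Set V) : Prop :=
  (∃ W : AffineSubspace K V, (W : Set V) = F) ∧ F.Nonempty ∧ flatDim K F = q ∧
  ∀ X ∈ interPosetIn Set.univ A,
    (rkIn K Set.univ X ≤ q → (F ∩ X).Nonempty ∧ flatDim K (F ∩ X) = q - rkIn K Set.univ X) ∧
    (q < rkIn K Set.univ X → F ∩ X = ∅)

end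

set_option maxHeartbeats 1600000
set_option synthInstance.maxHeartbeats 400000

set_option synthInstance.maxHeartbeats 400000
set_option maxHeartbeats 800000

section Aux
variable {ℓ : ℕ}

/-- affine subspace with carrier `↑W' ∩ {x | g x = r}` -/
noncomputable def hyperInf (W' : AffineSubspace ℝ (Fin ℓ → ℝ)) (g : (Fin ℓ → ℝ) →ₗ[ℝ] ℝ) (r : ℝ) :
    AffineSubspace ℝ (Fin ℓ → ℝ) where
  carrier := (W' : Set (Fin ℓ → ℝ)) ∩ {x | g x = r}
  smul_vsub_vadd_mem' := by
    intro t p1 p2 p3 h1 h2 h3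
    refine ⟨W'.smul_vsub_vadd_mem t h1.1 h2.1 h3.1, ?_⟩
    have e1 : g p1 = r := h1.2
    have e2 : g p2 = r := h2.2
    have e3 : g p3 = r := h3.2
    show g (t • (p1 -ᵥ p2) +ᵥ p3) = r
    simp only [vsub_eq_sub, vadd_eq_add, map_add, map_smul, map_sub, e1, e2, e3,
      sub_self, smul_zero, zero_add, smul_eq_mul, mul_zero]

lemma hyperInf_coe (W' : AffineSubspace ℝ (Fin ℓ → ℝ)) (g : (Fin ℓ → ℝ) →ₗ[ℝ] ℝ) (r : ℝ) :
    (hyperInf W' g r : Set (Fin ℓ → ℝ)) = (W' : Set (Fin ℓ → ℝ)) ∩ {x | g x = r} := rfl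

lemma flatDim_coe (W' : AffineSubspace ℝ (Fin ℓ → ℝ)) :
    flatDim ℝ (W' : Set (Fin ℓ → ℝ)) = Module.finrank ℝ W'.direction := by
  rw [flatDim, AffineSubspace.affineSpan_coe]

lemma flatDim_mono {X Y : Set (Fin ℓ → ℝ)} (h : X ⊆ Y) : flatDim ℝ X ≤ flatDim ℝ Y :=
  Submodule.finrank_mono (AffineSubspace.direction_le (affineSpan_mono ℝ h))

lemma direction_hyperInf (W' : AffineSubspace ℝ (Fin ℓ → ℝ)) (g : (Fin ℓ → ℝ) →ₗ[ℝ] ℝ) (r : ℝ)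
    (hne : ((W' : Set (Fin ℓ → ℝ)) ∩ {x | g x = r}).Nonempty) :
    (hyperInf W' g r).direction = W'.direction ⊓ LinearMap.ker g := by
  obtain ⟨x₀, hx₀⟩ := hne
  have hx₀' : x₀ ∈ hyperInf W' g r := hx₀
  ext v
  constructor
  · intro hv
    rw [AffineSubspace.mem_direction_iff_eq_vsub ⟨x₀, hx₀'⟩] at hv
    obtain ⟨p1, hp1, p2, hp2, rfl⟩ := hv
    refine ⟨AffineSubspace.vsub_mem_direction hp1.1 hp2.1, ?_⟩
    have e1 : g p1 = r := hp1.2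
    have e2 : g p2 = r := hp2.2
    simp [LinearMap.mem_ker, vsub_eq_sub, e1, e2]
  · rintro ⟨hvW, hvg⟩
    have hmem : v +ᵥ x₀ ∈ hyperInf W' g r := by
      refine ⟨AffineSubspace.vadd_mem_of_mem_direction hvW hx₀.1, ?_⟩
      show g (v +ᵥ x₀) = r
      have h0 : g v = 0 := hvg
      have hr : g x₀ = r := hx₀.2
      simp [vadd_eq_add, h0, hr]
    have := AffineSubspace.vsub_mem_direction hmem hx₀'
    simpa using this

lemma flatDim_inter_hyper (W' : AffineSubspace ℝ (Fin ℓ → ℝ)) (g : (Fin ℓ → ℝ) →ₗ[ℝ] ℝ) (r : ℝ)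
    (hne : ((W' : Set (Fin ℓ → ℝ)) ∩ {x | g x = r}).Nonempty)
    (hns : ¬ (W' : Set (Fin ℓ → ℝ)) ⊆ {x | g x = r}) :
    flatDim ℝ ((W' : Set (Fin ℓ → ℝ)) ∩ {x | g x = r}) + 1
      = flatDim ℝ (W' : Set (Fin ℓ → ℝ)) := by
  obtain ⟨x₀, hx₀W, hx₀g⟩ := hne
  obtain ⟨w, hwW, hwg⟩ := Set.not_subset.mp hns
  have h1 : flatDim ℝ ((W' : Set (Fin ℓ → ℝ)) ∩ {x | g x = r})
      = Module.finrank ℝ (W'.direction ⊓ LinearMap.ker g : Submodule ℝ (Fin ℓ → ℝ)) := by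
    rw [← hyperInf_coe, flatDim_coe, direction_hyperInf]
    exact ⟨x₀, hx₀W, hx₀g⟩
  rw [h1, flatDim_coe]
  -- rank-nullity for g restricted to the direction
  set U := W'.direction with hU
  set φ : U →ₗ[ℝ] ℝ := g.comp U.subtype with hφ
  have hker : LinearMap.ker φ = Submodule.comap U.subtype (LinearMap.ker g) := by
    rw [hφ, LinearMap.ker_comp]
  have hrange : LinearMap.range φ = ⊤ := by
    have hv : (⟨w -ᵥ x₀, AffineSubspace.vsub_mem_direction hwW hx₀W⟩ : U) ∈ (⊤ : Submodule ℝ U) :=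
      trivial
    have hφv : φ ⟨w -ᵥ x₀, AffineSubspace.vsub_mem_direction hwW hx₀W⟩ ≠ 0 := by
      simp only [hφ, LinearMap.comp_apply, Submodule.subtype_apply]
      show g (w -ᵥ x₀) ≠ 0
      have : g x₀ = r := hx₀g
      simp [vsub_eq_sub, this]
      intro h
      exact hwg (by simpa [sub_eq_zero] using h)
    have hne' : LinearMap.range φ ≠ ⊥ := by
      intro h
      apply hφv
      have : φ ⟨w -ᵥ x₀, AffineSubspace.vsub_mem_direction hwW hx₀W⟩ ∈ LinearMap.range φ :=
        LinearMap.mem_range_self φ _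
      rw [h] at this
      simpa using this
    have h1 : Module.finrank ℝ (LinearMap.range φ) ≤ 1 := by
      simpa using Submodule.finrank_le (LinearMap.range φ)
    have h2 : Module.finrank ℝ (LinearMap.range φ) ≠ 0 := by
      intro h0
      exact hne' (Submodule.finrank_eq_zero.mp h0)
    have h3 : Module.finrank ℝ (LinearMap.range φ) = 1 := by omega
    rw [← Module.finrank_self ℝ] at h3
    exact Submodule.eq_top_of_finrank_eq h3
  have hrn := LinearMap.finrank_range_add_finrank_ker φ
  rw [hrange] at hrn
  have htop : Module.finrank ℝ (⊤ : Submodule ℝ ℝ) = 1 := by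
    simp [Module.finrank_self]
  have hmap : Submodule.map U.subtype (LinearMap.ker φ) = U ⊓ LinearMap.ker g := by
    rw [hker, Submodule.map_comap_subtype]
  have hfr : Module.finrank ℝ (U ⊓ LinearMap.ker g : Submodule ℝ (Fin ℓ → ℝ))
      = Module.finrank ℝ (LinearMap.ker φ) := by
    rw [← hmap]
    exact (Submodule.equivMapOfInjective U.subtype U.injective_subtype
      (LinearMap.ker φ)).symm.finrank_eq
  rw [hfr]
  omega

end Aux





section Key
variable {ℓ : ℕ}

/-- Key geometric counting lemma for one cell and one hyperplane. -/
lemma key_count (W' : AffineSubspace ℝ (Fin ℓ → ℝ)) (U : Set (Fin ℓ → ℝ))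
    (hU : IsOpen U) (hUc : Convex ℝ U) (g : (Fin ℓ → ℝ) →ₗ[ℝ] ℝ) (r : ℝ)
    (hns : ¬ (W' : Set (Fin ℓ → ℝ)) ⊆ {x | g x = r}) :
    ((if ((↑W' ∩ U) ∩ {x | g x < r}).Nonempty then 1 else 0)
      + (if ((↑W' ∩ U) ∩ {x | r < g x}).Nonempty then 1 else 0) : ℕ)
    = (if ((↑W' ∩ U : Set (Fin ℓ → ℝ))).Nonempty then 1 else 0)
      + (if ((↑W' ∩ U) ∩ {x | g x = r}).Nonempty then 1 else 0) := by
  set C : Set (Fin ℓ → ℝ) := ↑W' ∩ U with hC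
  have hCconv : Convex ℝ C := (W'.convex).inter hUc
  by_cases hCne : C.Nonempty
  · by_cases hH : (C ∩ {x | g x = r}).Nonempty
    · -- both sides of the hyperplane are hit
      have hHne := hH
      obtain ⟨x, hxC, hxg⟩ := hH
      have hgx : g x = r := hxg
      obtain ⟨w, hwW, hwg⟩ := Set.not_subset.mp hns
      set v : Fin ℓ → ℝ := w - x with hv
      have hgv : g v ≠ 0 := by
        simp only [hv, map_sub]
        intro h
        exact hwg (by simpa [sub_eq_zero, hgx] using h)
      -- the line t ↦ x + t • v
      have hcont : Continuous fun t : ℝ => x + t • v :=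
        continuous_const.add (continuous_id.smul continuous_const)
      have hxU : x ∈ U := hxC.2
      have hopen : IsOpen ((fun t : ℝ => x + t • v) ⁻¹' U) := hU.preimage hcont
      have h0 : (0 : ℝ) ∈ (fun t : ℝ => x + t • v) ⁻¹' U := by simp [hxU]
      obtain ⟨ε, hε, hball⟩ := Metric.isOpen_iff.mp hopen 0 h0
      have hmemC : ∀ t : ℝ, |t| < ε → x + t • v ∈ C := by
        intro t ht
        constructor
        · -- in W'
          have hvdir : v ∈ W'.direction := by
            have := AffineSubspace.vsub_mem_direction hwW hxC.1
            simpa [hv] using this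
          have := AffineSubspace.vadd_mem_of_mem_direction
            (Submodule.smul_mem _ t hvdir) hxC.1
          simpa [vadd_eq_add, add_comm] using this
        · exact hball (by simpa [Real.dist_eq] using ht)
      have hval : ∀ t : ℝ, g (x + t • v) = r + t * g v := by
        intro t; simp [map_add, map_smul, hgx, smul_eq_mul]
      -- pick t of each sign
      have hεpos : (0:ℝ) < ε := hε
      rcases lt_or_gt_of_ne hgv with hneg | hpos
      · -- g v < 0 : t>0 gives < r, t<0 gives > r
        have ht1 : ((C ∩ {x | g x < r})).Nonempty := by
          refine ⟨x + (ε/2) • v, hmemC _ (by rw [abs_of_pos (by linarith)]; linarith), ?_⟩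
          show g (x + (ε/2) • v) < r
          rw [hval]; nlinarith
        have ht2 : ((C ∩ {x | r < g x})).Nonempty := by
          refine ⟨x + (-(ε/2)) • v, hmemC _ (by rw [abs_of_neg (by linarith)]; linarith), ?_⟩
          show r < g (x + (-(ε/2)) • v)
          rw [hval]; nlinarith
        simp [ht1, ht2, hCne, hHne]
      · have ht1 : ((C ∩ {x | g x < r})).Nonempty := by
          refine ⟨x + (-(ε/2)) • v, hmemC _ (by rw [abs_of_neg (by linarith)]; linarith), ?_⟩
          show g (x + (-(ε/2)) • v) < r
          rw [hval]; nlinarith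
        have ht2 : ((C ∩ {x | r < g x})).Nonempty := by
          refine ⟨x + (ε/2) • v, hmemC _ (by rw [abs_of_pos (by linarith)]; linarith), ?_⟩
          show r < g (x + (ε/2) • v)
          rw [hval]; nlinarith
        simp [ht1, ht2, hCne, hHne]
    · -- C misses the hyperplane: exactly one side nonempty
      have honeside : ¬ (((C ∩ {x | g x < r})).Nonempty ∧ ((C ∩ {x | r < g x})).Nonempty) := by
        rintro ⟨⟨a, haC, hag⟩, ⟨b, hbC, hbg⟩⟩
        have hag' : g a < r := hag
        have hbg' : r < g b := hbg
        set t : ℝ := (r - g a) / (g b - g a) with htdef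
        have hd : 0 < g b - g a := by linarith
        have ht0 : 0 ≤ t := div_nonneg (by linarith) (le_of_lt hd)
        have ht1 : t ≤ 1 := by
          rw [htdef, div_le_one hd]; linarith
        have hz : (1 - t) • a + t • b ∈ C :=
          hCconv haC hbC (by linarith) ht0 (by ring)
        apply hH
        refine ⟨(1 - t) • a + t • b, hz, ?_⟩
        show g ((1 - t) • a + t • b) = r
        rw [map_add, map_smul, map_smul, smul_eq_mul, smul_eq_mul]
        field_simp [htdef]
        have ht' : t * (g b - g a) = r - g a := by rw [htdef]; exact div_mul_cancel₀ _ (ne_of_gt hd)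
        linear_combination ht'
      have hsome : (((C ∩ {x | g x < r})).Nonempty ∨ ((C ∩ {x | r < g x})).Nonempty) := by
        obtain ⟨a, haC⟩ := hCne
        rcases lt_trichotomy (g a) r with h | h | h
        · exact Or.inl ⟨a, haC, h⟩
        · exact absurd ⟨a, haC, h⟩ hH
        · exact Or.inr ⟨a, haC, h⟩
      rcases hsome with h | h
      · have h2 : ¬ ((C ∩ {x | r < g x})).Nonempty := fun hh => honeside ⟨h, hh⟩
        simp [h, h2, hCne, hH]
      · have h2 : ¬ ((C ∩ {x | g x < r})).Nonempty := fun hh => honeside ⟨hh, h⟩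
        simp [h, h2, hCne, hH]
  · -- C empty
    have h1 : ¬ ((C ∩ {x | g x < r})).Nonempty := fun ⟨a, ha⟩ => hCne ⟨a, ha.1⟩
    have h2 : ¬ ((C ∩ {x | r < g x})).Nonempty := fun ⟨a, ha⟩ => hCne ⟨a, ha.1⟩
    have h3 : ¬ ((C ∩ {x | g x = r})).Nonempty := fun ⟨a, ha⟩ => hCne ⟨a, ha.1⟩
    simp [h1, h2, h3, hCne]

end Key

section Cells
variable {ℓ : ℕ}

/-- The open region cut out by one hyperplane constraint. -/
def zSide (f : Set (Fin ℓ → ℝ) → ((Fin ℓ → ℝ) →ₗ[ℝ] ℝ)) (c : Set (Fin ℓ → ℝ) → ℝ)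
    (S : Finset (Set (Fin ℓ → ℝ))) (H : Set (Fin ℓ → ℝ)) : Set (Fin ℓ → ℝ) :=
  {x | if H ∈ S then c H < f H x else f H x < c H}

/-- The (possibly empty) open cell with sign pattern `S ⊆ E` in ambient `W`. -/
def zCell (f : Set (Fin ℓ → ℝ) → ((Fin ℓ → ℝ) →ₗ[ℝ] ℝ)) (c : Set (Fin ℓ → ℝ) → ℝ)
    (W : Set (Fin ℓ → ℝ)) (E S : Finset (Set (Fin ℓ → ℝ))) : Set (Fin ℓ → ℝ) :=
  W ∩ ⋂ H ∈ E, zSide f c S H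

/-- Number of nonempty cells. -/
noncomputable def zN (f : Set (Fin ℓ → ℝ) → ((Fin ℓ → ℝ) →ₗ[ℝ] ℝ)) (c : Set (Fin ℓ → ℝ) → ℝ)
    (W : Set (Fin ℓ → ℝ)) (E : Finset (Set (Fin ℓ → ℝ))) : ℕ :=
  (E.powerset.filter fun S => (zCell f c W E S).Nonempty).card

variable (f : Set (Fin ℓ → ℝ) → ((Fin ℓ → ℝ) →ₗ[ℝ] ℝ)) (c : Set (Fin ℓ → ℝ) → ℝ)

lemma zSide_isOpen (S : Finset (Set (Fin ℓ → ℝ))) (H : Set (Fin ℓ → ℝ)) :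
    IsOpen (zSide f c S H) := by
  unfold zSide
  by_cases h : H ∈ S <;> simp only [h, if_true, if_false]
  · exact (isOpen_lt continuous_const (f H).continuous_of_finiteDimensional)
  · exact (isOpen_lt (f H).continuous_of_finiteDimensional continuous_const)

lemma zSide_convex (S : Finset (Set (Fin ℓ → ℝ))) (H : Set (Fin ℓ → ℝ)) :
    Convex ℝ (zSide f c S H) := by
  unfold zSide
  by_cases h : H ∈ S <;> simp only [h, if_true, if_false]
  · exact convex_halfSpace_gt (f H).isLinear _
  · exact convex_halfSpace_lt (f H).isLinear _

lemma zCell_congr (W : Set (Fin ℓ → ℝ)) (E : Finset (Set (Fin ℓ → ℝ)))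
    {S S' : Finset (Set (Fin ℓ → ℝ))} (h : ∀ H ∈ E, (H ∈ S ↔ H ∈ S')) :
    zCell f c W E S = zCell f c W E S' := by
  unfold zCell
  congr 1
  apply Set.iInter₂_congr
  intro H hH
  unfold zSide
  ext x
  simp only [Set.mem_setOf_eq]
  exact iff_of_eq (if_congr (h H hH) rfl rfl)

lemma zCell_insert {H : Set (Fin ℓ → ℝ)} {E' : Finset (Set (Fin ℓ → ℝ))} (hH : H ∉ E')
    (W : Set (Fin ℓ → ℝ)) (T : Finset (Set (Fin ℓ → ℝ))) :
    zCell f c W (insert H E') T = zCell f c W E' T ∩ zSide f c T H := by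
  unfold zCell
  rw [Finset.set_biInter_insert]
  ext x
  simp only [Set.mem_inter_iff, Set.mem_iInter]
  tauto

lemma zCell_inter_ambient (W H' : Set (Fin ℓ → ℝ)) (E S : Finset (Set (Fin ℓ → ℝ))) :
    zCell f c W E S ∩ H' = zCell f c (W ∩ H') E S := by
  unfold zCell
  ext x
  simp only [Set.mem_inter_iff, Set.mem_iInter]
  tauto

lemma zCell_subset (W : Set (Fin ℓ → ℝ)) (E S : Finset (Set (Fin ℓ → ℝ))) :
    zCell f c W E S ⊆ W := Set.inter_subset_left

lemma zN_ambient_empty (E : Finset (Set (Fin ℓ → ℝ))) : zN f c ∅ E = 0 := by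
  unfold zN
  rw [Finset.card_eq_zero, Finset.filter_eq_empty_iff]
  intro S _
  rw [Set.not_nonempty_iff_eq_empty]
  have := zCell_subset f c (∅ : Set (Fin ℓ → ℝ)) E S
  exact Set.eq_empty_of_subset_empty this

lemma zN_empty (W : Set (Fin ℓ → ℝ)) (hW : W.Nonempty) : zN f c W ∅ = 1 := by
  unfold zN
  rw [Finset.powerset_empty]
  rw [Finset.filter_eq_self.mpr, Finset.card_singleton]
  intro S hS
  rw [Finset.mem_singleton] at hS
  subst hS
  unfold zCell
  simpa using hW

lemma zN_subset_ambient (E : Finset (Set (Fin ℓ → ℝ))) {W H : Set (Fin ℓ → ℝ)}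
    (hWH : W ⊆ H) (hHE : H ∈ E) (hHeq : H = {x | f H x = c H}) : zN f c W E = 0 := by
  unfold zN
  rw [Finset.card_eq_zero, Finset.filter_eq_empty_iff]
  intro S _
  rw [Set.not_nonempty_iff_eq_empty]
  rw [Set.eq_empty_iff_forall_notMem]
  rintro x ⟨hxW, hxE⟩
  have hxH : x ∈ H := hWH hxW
  have hxf : f H x = c H := by rw [hHeq] at hxH; exact hxH
  have hxside : x ∈ zSide f c S H := by
    rw [Set.mem_iInter₂] at hxE
    exact hxE H hHE
  unfold zSide at hxside
  by_cases h : H ∈ S <;> simp only [h, if_true, if_false, Set.mem_setOf_eq] at hxside <;>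
    rw [hxf] at hxside <;> exact lt_irrefl _ hxside

/-- Deletion recursion for cell counts. -/
lemma zN_rec {H : Set (Fin ℓ → ℝ)} {E' : Finset (Set (Fin ℓ → ℝ))} (hH : H ∉ E')
    (hHeq : H = {x | f H x = c H}) (W' : AffineSubspace ℝ (Fin ℓ → ℝ))
    (hns : ¬ (W' : Set (Fin ℓ → ℝ)) ⊆ H) :
    zN f c (W' : Set (Fin ℓ → ℝ)) (insert H E')
      = zN f c (W' : Set (Fin ℓ → ℝ)) E' + zN f c ((W' : Set (Fin ℓ → ℝ)) ∩ H) E' := by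
  have hdisj : Disjoint E'.powerset (E'.powerset.image (insert H)) := by
    rw [Finset.disjoint_left]
    intro S hS hS'
    obtain ⟨T, _, rfl⟩ := Finset.mem_image.mp hS'
    exact hH (Finset.mem_powerset.mp hS (Finset.mem_insert_self H T))
  have hinj : ∀ a ∈ E'.powerset, ∀ b ∈ E'.powerset, insert H a = insert H b → a = b := by
    intro a ha b hb hab
    have hHa : H ∉ a := fun h => hH (Finset.mem_powerset.mp ha h)
    have hHb : H ∉ b := fun h => hH (Finset.mem_powerset.mp hb h)
    rw [← Finset.erase_insert hHa, ← Finset.erase_insert hHb, hab]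
  unfold zN
  rw [Finset.card_filter, Finset.card_filter, Finset.card_filter,
    Finset.powerset_insert, Finset.sum_union hdisj, Finset.sum_image hinj,
    ← Finset.sum_add_distrib, ← Finset.sum_add_distrib]
  apply Finset.sum_congr rfl
  intro S hS
  have hHS : H ∉ S := fun h => hH (Finset.mem_powerset.mp hS h)
  -- rewrite the two cells of the extended arrangement
  have e1 : zCell f c (W' : Set (Fin ℓ → ℝ)) (insert H E') S
      = zCell f c (W' : Set (Fin ℓ → ℝ)) E' S ∩ {x | f H x < c H} := by
    rw [zCell_insert f c hH]
    unfold zSide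
    simp only [if_neg hHS]
  have e2 : zCell f c (W' : Set (Fin ℓ → ℝ)) (insert H E') (insert H S)
      = zCell f c (W' : Set (Fin ℓ → ℝ)) E' S ∩ {x | c H < f H x} := by
    rw [zCell_insert f c hH]
    rw [zCell_congr f c _ E' (S' := S) (fun H' hH' => by
      have : H' ≠ H := fun e => hH (e ▸ hH')
      simp [Finset.mem_insert, this])]
    unfold zSide
    simp only [if_pos (Finset.mem_insert_self H S)]
  have e3 : zCell f c (W' : Set (Fin ℓ → ℝ)) E' S ∩ H
      = zCell f c ((W' : Set (Fin ℓ → ℝ)) ∩ H) E' S := zCell_inter_ambient f c _ _ _ _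
  rw [e1, e2, ← e3]
  -- apply the key geometric lemma
  have hU : IsOpen (⋂ H' ∈ E', zSide f c S H') := isOpen_biInter_finset
    (fun H' _ => zSide_isOpen f c S H')
  have hUc : Convex ℝ (⋂ H' ∈ E', zSide f c S H') := by
    apply convex_iInter₂
    intro H' _
    exact zSide_convex f c S H'
  have hcell : zCell f c (W' : Set (Fin ℓ → ℝ)) E' S
      = (W' : Set (Fin ℓ → ℝ)) ∩ ⋂ H' ∈ E', zSide f c S H' := rfl
  have hns' : ¬ (W' : Set (Fin ℓ → ℝ)) ⊆ {x | f H x = c H} := by rw [← hHeq]; exact hns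
  have hkey := key_count W' (⋂ H' ∈ E', zSide f c S H') hU hUc (f H) (c H) hns'
  rw [← hcell, ← hHeq] at hkey
  exact hkey

end Cells

section ZZ
variable {ℓ : ℕ}

/-- The Whitney-type subset expansion of the Poincaré polynomial at `t = 1`. -/
noncomputable def zZ (W : Set (Fin ℓ → ℝ)) (E : Finset (Set (Fin ℓ → ℝ))) : ℤ :=
  ∑ S ∈ E.powerset.filter (fun S => (W ∩ ⋂ H ∈ S, H).Nonempty),
    (-1) ^ (S.card + rkIn ℝ W (W ∩ ⋂ H ∈ S, H))

lemma zZ_empty (W : Set (Fin ℓ → ℝ)) (hW : W.Nonempty) : zZ W ∅ = 1 := by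
  unfold zZ
  rw [Finset.powerset_empty]
  have h1 : (W ∩ ⋂ H ∈ (∅ : Finset (Set (Fin ℓ → ℝ))), H) = W := by simp
  rw [Finset.filter_singleton]
  rw [if_pos (by rw [h1]; exact hW)]
  rw [Finset.sum_singleton, h1]
  simp [rkIn]

lemma zZ_rec {H : Set (Fin ℓ → ℝ)} {E' : Finset (Set (Fin ℓ → ℝ))} (hH : H ∉ E')
    (W : Set (Fin ℓ → ℝ)) :
    zZ W (insert H E') = zZ W E'
      + ∑ S ∈ E'.powerset, if (((W ∩ H) ∩ ⋂ H' ∈ S, H')).Nonempty then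
          (-1 : ℤ) ^ (S.card + 1 + rkIn ℝ W ((W ∩ H) ∩ ⋂ H' ∈ S, H')) else 0 := by
  have hdisj : Disjoint E'.powerset (E'.powerset.image (insert H)) := by
    rw [Finset.disjoint_left]
    intro S hS hS'
    obtain ⟨T, _, rfl⟩ := Finset.mem_image.mp hS'
    exact hH (Finset.mem_powerset.mp hS (Finset.mem_insert_self H T))
  have hinj : ∀ a ∈ E'.powerset, ∀ b ∈ E'.powerset, insert H a = insert H b → a = b := by
    intro a ha b hb hab
    have hHa : H ∉ a := fun h => hH (Finset.mem_powerset.mp ha h)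
    have hHb : H ∉ b := fun h => hH (Finset.mem_powerset.mp hb h)
    rw [← Finset.erase_insert hHa, ← Finset.erase_insert hHb, hab]
  unfold zZ
  rw [Finset.sum_filter, Finset.sum_filter, Finset.powerset_insert,
    Finset.sum_union hdisj, Finset.sum_image hinj]
  congr 1
  apply Finset.sum_congr rfl
  intro S hS
  have hHS : H ∉ S := fun h => hH (Finset.mem_powerset.mp hS h)
  have hflat : (W ∩ ⋂ H' ∈ insert H S, H') = ((W ∩ H) ∩ ⋂ H' ∈ S, H') := by
    rw [Finset.set_biInter_insert, Set.inter_assoc]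
  have hcard : (insert H S).card = S.card + 1 := Finset.card_insert_of_notMem hHS
  rw [hflat, hcard]

lemma zZ_subset {H : Set (Fin ℓ → ℝ)} {E' : Finset (Set (Fin ℓ → ℝ))} (hH : H ∉ E')
    {W : Set (Fin ℓ → ℝ)} (hWH : W ⊆ H) : zZ W (insert H E') = 0 := by
  rw [zZ_rec hH W]
  have hWHe : W ∩ H = W := Set.inter_eq_left.mpr hWH
  rw [hWHe]
  unfold zZ
  rw [Finset.sum_filter]
  rw [← Finset.sum_add_distrib]
  apply Finset.sum_eq_zero
  intro S _
  by_cases h : ((W ∩ ⋂ H' ∈ S, H')).Nonempty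
  · rw [if_pos h, if_pos h, show S.card + 1 + rkIn ℝ W (W ∩ ⋂ H' ∈ S, H')
        = (S.card + rkIn ℝ W (W ∩ ⋂ H' ∈ S, H')) + 1 from by omega, pow_succ]
    ring
  · rw [if_neg h, if_neg h]
    ring

lemma zZ_disjoint {H : Set (Fin ℓ → ℝ)} {E' : Finset (Set (Fin ℓ → ℝ))} (hH : H ∉ E')
    {W : Set (Fin ℓ → ℝ)} (hWH : W ∩ H = ∅) : zZ W (insert H E') = zZ W E' := by
  rw [zZ_rec hH W]
  have : ∀ S ∈ E'.powerset, (if (((W ∩ H) ∩ ⋂ H' ∈ S, H')).Nonempty then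
      (-1 : ℤ) ^ (S.card + 1 + rkIn ℝ W ((W ∩ H) ∩ ⋂ H' ∈ S, H')) else 0) = 0 := by
    intro S _
    rw [if_neg]
    rw [hWH, Set.empty_inter]
    exact Set.not_nonempty_empty
  rw [Finset.sum_congr rfl this, Finset.sum_const_zero, add_zero]

lemma zZ_step {H : Set (Fin ℓ → ℝ)} {E' : Finset (Set (Fin ℓ → ℝ))} (hH : H ∉ E')
    {W : Set (Fin ℓ → ℝ)} (hcodim : flatDim ℝ (W ∩ H) + 1 = flatDim ℝ W) :
    zZ W (insert H E') = zZ W E' + zZ (W ∩ H) E' := by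
  rw [zZ_rec hH W]
  congr 1
  unfold zZ
  rw [Finset.sum_filter]
  apply Finset.sum_congr rfl
  intro S _
  by_cases h : (((W ∩ H) ∩ ⋂ H' ∈ S, H')).Nonempty
  · rw [if_pos h, if_pos h]
    have hsub : ((W ∩ H) ∩ ⋂ H' ∈ S, H') ⊆ W ∩ H := Set.inter_subset_left
    have hmono := flatDim_mono hsub
    have hrk : rkIn ℝ W ((W ∩ H) ∩ ⋂ H' ∈ S, H')
        = rkIn ℝ (W ∩ H) ((W ∩ H) ∩ ⋂ H' ∈ S, H') + 1 := by
      unfold rkIn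
      omega
    rw [hrk, show S.card + 1 + (rkIn ℝ (W ∩ H) ((W ∩ H) ∩ ⋂ H' ∈ S, H') + 1)
      = S.card + rkIn ℝ (W ∩ H) ((W ∩ H) ∩ ⋂ H' ∈ S, H') + 2 from by omega, pow_add]
    norm_num
  · rw [if_neg h, if_neg h]

/-- The main induction: the number of cells equals the Whitney sum. -/
theorem zN_eq_zZ (f : Set (Fin ℓ → ℝ) → ((Fin ℓ → ℝ) →ₗ[ℝ] ℝ)) (c : Set (Fin ℓ → ℝ) → ℝ) :
    ∀ (E : Finset (Set (Fin ℓ → ℝ))), (∀ H ∈ E, H = {x | f H x = c H}) →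
    ∀ (W : Set (Fin ℓ → ℝ)), (∃ W' : AffineSubspace ℝ (Fin ℓ → ℝ), (W' : Set (Fin ℓ → ℝ)) = W) →
    W.Nonempty → (zN f c W E : ℤ) = zZ W E := by
  intro E
  induction E using Finset.strongInduction with
  | _ E ih =>
    intro hE W hWaff hWne
    rcases Finset.eq_empty_or_nonempty E with rfl | ⟨H, hHE⟩
    · rw [zN_empty f c W hWne, zZ_empty W hWne]
      norm_num
    · have hHne : H ∉ E.erase H := Finset.notMem_erase H E
      have hEeq : E = insert H (E.erase H) := (Finset.insert_erase hHE).symm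
      have hssub : E.erase H ⊂ E := Finset.erase_ssubset hHE
      have hE'h : ∀ H' ∈ E.erase H, H' = {x | f H' x = c H'} := fun H' h =>
        hE H' (Finset.mem_of_mem_erase h)
      have hHeq : H = {x | f H x = c H} := hE H hHE
      obtain ⟨W', rfl⟩ := hWaff
      by_cases hWH : (W' : Set (Fin ℓ → ℝ)) ⊆ H
      · rw [zN_subset_ambient f c E hWH hHE hHeq]
        rw [hEeq, zZ_subset hHne hWH]
        norm_num
      · rw [hEeq, zN_rec f c hHne hHeq W' hWH]
        push_cast
        rcases Set.eq_empty_or_nonempty ((W' : Set (Fin ℓ → ℝ)) ∩ H) with hint | hint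
        · rw [zZ_disjoint hHne hint, hint, zN_ambient_empty f c]
          rw [ih _ hssub hE'h _ ⟨W', rfl⟩ hWne]
          norm_num
        · have hns' : ¬ (W' : Set (Fin ℓ → ℝ)) ⊆ {x | f H x = c H} := by
            rw [← hHeq]; exact hWH
          have hint' : ((W' : Set (Fin ℓ → ℝ)) ∩ {x | f H x = c H}).Nonempty := by
            rw [← hHeq]; exact hint
          have hcodim : flatDim ℝ ((W' : Set (Fin ℓ → ℝ)) ∩ H) + 1
              = flatDim ℝ (W' : Set (Fin ℓ → ℝ)) := by
            have := flatDim_inter_hyper W' (f H) (c H) hint' hns'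
            rw [← hHeq] at this
            exact this
          rw [zZ_step hHne hcodim]
          rw [ih _ hssub hE'h _ ⟨W', rfl⟩ hWne]
          have haff2 : ∃ W'' : AffineSubspace ℝ (Fin ℓ → ℝ),
              (W'' : Set (Fin ℓ → ℝ)) = (W' : Set (Fin ℓ → ℝ)) ∩ H := by
            refine ⟨hyperInf W' (f H) (c H), ?_⟩
            rw [hyperInf_coe, ← hHeq]
          rw [ih _ hssub hE'h _ haff2 hint]

end ZZ

section Mobius
variable {ℓ : ℕ}

/-- Whitney's expansion of the Möbius function. -/
noncomputable def zg (A : Finset (Set (Fin ℓ → ℝ))) (X : Set (Fin ℓ → ℝ)) : ℤ :=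
  ∑ S ∈ A.powerset.filter (fun S => Set.univ ∩ ⋂ H ∈ S, H = X), (-1 : ℤ) ^ S.card

lemma mem_interPoset_iff {A : Finset (Set (Fin ℓ → ℝ))} {X : Set (Fin ℓ → ℝ)} :
    X ∈ interPosetIn Set.univ A ↔
      (∃ S ∈ A.powerset, Set.univ ∩ ⋂ H ∈ S, H = X) ∧ X.Nonempty := by
  unfold interPosetIn
  rw [Finset.mem_filter, Finset.mem_image]

lemma interPoset_nonempty {A : Finset (Set (Fin ℓ → ℝ))} {X : Set (Fin ℓ → ℝ)}
    (hX : X ∈ interPosetIn Set.univ A) : X.Nonempty := (mem_interPoset_iff.mp hX).2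

lemma univ_not_subset_hyper {H : Set (Fin ℓ → ℝ)} (hH : IsHyperplane ℝ H) :
    ¬ (Set.univ : Set (Fin ℓ → ℝ)) ⊆ H := by
  obtain ⟨g, r, hg, rfl⟩ := hH
  intro hsub
  obtain ⟨v, hv⟩ := DFunLike.ne_iff.mp hg
  simp only [LinearMap.zero_apply] at hv
  by_cases hr : r = 0
  · have := hsub (Set.mem_univ v)
    rw [Set.mem_setOf_eq] at this
    exact hv (by rw [this, hr])
  · have := hsub (Set.mem_univ 0)
    rw [Set.mem_setOf_eq, map_zero] at this
    exact hr this.symm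

lemma filter_above_eq_empty_iff {A : Finset (Set (Fin ℓ → ℝ))}
    (hA : ∀ H ∈ A, IsHyperplane ℝ H) {X : Set (Fin ℓ → ℝ)}
    (hX : X ∈ interPosetIn Set.univ A) :
    (A.filter fun H => X ⊆ H) = ∅ ↔ X = Set.univ := by
  constructor
  · intro h
    obtain ⟨⟨S, hS, hSX⟩, _⟩ := mem_interPoset_iff.mp hX
    have hSempty : S = ∅ := by
      rw [Finset.eq_empty_iff_forall_notMem]
      intro H hHS
      have hXH : X ⊆ H := by
        rw [← hSX]
        exact Set.inter_subset_right.trans (Set.biInter_subset_of_mem hHS)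
      have : H ∈ A.filter fun H => X ⊆ H :=
        Finset.mem_filter.mpr ⟨Finset.mem_powerset.mp hS hHS, hXH⟩
      rw [h] at this
      exact Finset.notMem_empty _ this
    rw [← hSX, hSempty]
    all_goals simp
  · rintro rfl
    rw [Finset.filter_eq_empty_iff]
    intro H hH
    exact univ_not_subset_hyper (hA H hH)

/-- `zg` satisfies the defining recursion of the Möbius function. -/
lemma zg_mobius {A : Finset (Set (Fin ℓ → ℝ))} (hA : ∀ H ∈ A, IsHyperplane ℝ H)
    {X : Set (Fin ℓ → ℝ)} (hX : X ∈ interPosetIn Set.univ A) :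
    (∑ Y ∈ (interPosetIn Set.univ A).filter fun Y => X ⊆ Y, zg A Y)
      = if X = Set.univ then 1 else 0 := by
  have hXne : X.Nonempty := interPoset_nonempty hX
  set Q : Finset (Finset (Set (Fin ℓ → ℝ))) :=
    A.powerset.filter (fun S => X ⊆ Set.univ ∩ ⋂ H ∈ S, H) with hQ
  have hmaps : ∀ S ∈ Q, (Set.univ ∩ ⋂ H ∈ S, H) ∈
      (interPosetIn Set.univ A).filter fun Y => X ⊆ Y := by
    intro S hS
    rw [hQ, Finset.mem_filter] at hS
    refine Finset.mem_filter.mpr ⟨mem_interPoset_iff.mpr ⟨⟨S, hS.1, rfl⟩, ?_⟩, hS.2⟩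
    exact hXne.mono hS.2
  have hfib := Finset.sum_fiberwise_of_maps_to hmaps (fun S => (-1 : ℤ) ^ S.card)
  have hinner : ∀ Y ∈ (interPosetIn Set.univ A).filter (fun Y => X ⊆ Y),
      (∑ S ∈ Q.filter fun S => (Set.univ ∩ ⋂ H ∈ S, H) = Y, (-1 : ℤ) ^ S.card) = zg A Y := by
    intro Y hY
    rw [Finset.mem_filter] at hY
    unfold zg
    congr 1
    rw [hQ, Finset.filter_filter]
    apply Finset.filter_congr
    intro S hS
    constructor
    · exact fun h => h.2
    · intro h
      exact ⟨by rw [h]; exact hY.2, h⟩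
  rw [← Finset.sum_congr rfl hinner, hfib]
  -- now the sum over Q
  have hQeq : Q = (A.filter fun H => X ⊆ H).powerset := by
    ext S
    rw [hQ, Finset.mem_filter, Finset.mem_powerset, Finset.mem_powerset]
    constructor
    · rintro ⟨hSA, hSX⟩
      intro H hHS
      refine Finset.mem_filter.mpr ⟨hSA hHS, ?_⟩
      exact hSX.trans (Set.inter_subset_right.trans (Set.biInter_subset_of_mem hHS))
    · intro h
      constructor
      · exact fun H hHS => (Finset.mem_filter.mp (h hHS)).1
      · refine Set.subset_inter (Set.subset_univ X) ?_
        apply Set.subset_iInter₂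
        intro H hHS
        exact (Finset.mem_filter.mp (h hHS)).2
  rw [hQeq, Finset.sum_powerset_neg_one_pow_card]
  simp only [filter_above_eq_empty_iff hA hX]

/-- Uniqueness of the Möbius function. -/
lemma mobius_unique {A : Finset (Set (Fin ℓ → ℝ))} (hA : ∀ H ∈ A, IsHyperplane ℝ H)
    (μ : Set (Fin ℓ → ℝ) → ℤ) (hμ : IsMobiusIn Set.univ A μ) :
    ∀ X ∈ interPosetIn Set.univ A, μ X = zg A X := by
  suffices h : ∀ n : ℕ, ∀ X ∈ interPosetIn Set.univ A,
      ((interPosetIn Set.univ A).filter fun Y => X ⊆ Y).card ≤ n → μ X = zg A X by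
    intro X hX
    exact h _ X hX le_rfl
  intro n
  induction n with
  | zero =>
    intro X hX hcard
    exfalso
    have : X ∈ (interPosetIn Set.univ A).filter fun Y => X ⊆ Y :=
      Finset.mem_filter.mpr ⟨hX, subset_rfl⟩
    have := Finset.card_pos.mpr ⟨X, this⟩
    omega
  | succ n ihn =>
    intro X hX hcard
    have hXf : X ∈ (interPosetIn Set.univ A).filter fun Y => X ⊆ Y :=
      Finset.mem_filter.mpr ⟨hX, subset_rfl⟩
    have h1 := hμ X hX
    have h2 := zg_mobius hA hX
    rw [← Finset.add_sum_erase _ _ hXf] at h1 h2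
    have hrest : ∀ Y ∈ ((interPosetIn Set.univ A).filter fun Y => X ⊆ Y).erase X,
        μ Y = zg A Y := by
      intro Y hY
      obtain ⟨hYne, hYf⟩ := Finset.mem_erase.mp hY
      obtain ⟨hYL, hXY⟩ := Finset.mem_filter.mp hYf
      apply ihn Y hYL
      have hsub : (interPosetIn Set.univ A).filter (fun Z => Y ⊆ Z) ⊆
          ((interPosetIn Set.univ A).filter fun Z => X ⊆ Z).erase X := by
        intro Z hZ
        obtain ⟨hZL, hYZ⟩ := Finset.mem_filter.mp hZ
        refine Finset.mem_erase.mpr ⟨?_, Finset.mem_filter.mpr ⟨hZL, hXY.trans hYZ⟩⟩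
        rintro rfl
        exact hYne (Set.Subset.antisymm hXY hYZ).symm
      have := Finset.card_le_card hsub
      have := Finset.card_erase_of_mem hXf
      omega
    rw [Finset.sum_congr rfl hrest] at h1
    linarith

end Mobius

section Chambers
variable {ℓ : ℕ}
variable (f : Set (Fin ℓ → ℝ) → ((Fin ℓ → ℝ) →ₗ[ℝ] ℝ)) (c : Set (Fin ℓ → ℝ) → ℝ)
variable {A : Finset (Set (Fin ℓ → ℝ))}

/-- the complement of the arrangement -/
local notation "M" => Set.univ ∩ (⋃ H ∈ A, (H : Set (Fin ℓ → ℝ)))ᶜ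

lemma mem_cell_of_mem_M (hfc : ∀ H ∈ A, H = {x | f H x = c H}) {x : Fin ℓ → ℝ}
    (hx : x ∈ M) : x ∈ zCell f c Set.univ A (A.filter fun H => c H < f H x) := by
  refine ⟨trivial, ?_⟩
  rw [Set.mem_iInter₂]
  intro H hH
  unfold zSide
  by_cases hcf : c H < f H x
  · have hmem : H ∈ A.filter (fun H => c H < f H x) := Finset.mem_filter.mpr ⟨hH, hcf⟩
    rw [Set.mem_setOf_eq, if_pos hmem]
    exact hcf
  · have hmem : H ∉ A.filter (fun H => c H < f H x) :=
      fun hmem => hcf (Finset.mem_filter.mp hmem).2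
    rw [Set.mem_setOf_eq, if_neg hmem]
    have hxnH : x ∉ H := by
      intro hxH
      have := hx.2
      rw [Set.mem_compl_iff] at this
      exact this (Set.mem_biUnion hH hxH)
    have hne : f H x ≠ c H := by
      intro he
      exact hxnH (by rw [hfc H hH]; exact he)
    exact lt_of_le_of_ne (le_of_not_gt hcf) hne

lemma cell_subset_M (hfc : ∀ H ∈ A, H = {x | f H x = c H})
    (S : Finset (Set (Fin ℓ → ℝ))) : zCell f c Set.univ A S ⊆ M := by
  rintro x ⟨-, hx⟩
  refine ⟨trivial, ?_⟩
  rw [Set.mem_compl_iff]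
  intro hmem
  obtain ⟨H, hH, hxH⟩ := Set.mem_iUnion₂.mp hmem
  rw [Set.mem_iInter₂] at hx
  have hside := hx H hH
  have hfx : f H x = c H := by rw [hfc H hH] at hxH; exact hxH
  unfold zSide at hside
  by_cases h : H ∈ S <;> simp only [h, if_pos, if_neg, Set.mem_setOf_eq] at hside <;>
    rw [hfx] at hside <;> exact lt_irrefl _ hside

lemma cell_eq_of_mem {S S' : Finset (Set (Fin ℓ → ℝ))} (hS : S ⊆ A) (hS' : S' ⊆ A)
    {x : Fin ℓ → ℝ} (hx : x ∈ zCell f c Set.univ A S) (hx' : x ∈ zCell f c Set.univ A S') :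
    S = S' := by
  have hx2 := Set.mem_iInter₂.mp hx.2
  have hx2' := Set.mem_iInter₂.mp hx'.2
  ext H
  by_cases hHA : H ∈ A
  · have h1 := hx2 H hHA
    have h2 := hx2' H hHA
    unfold zSide at h1 h2
    rw [Set.mem_setOf_eq] at h1 h2
    constructor
    · intro hS1
      by_contra hS2
      rw [if_pos hS1] at h1
      rw [if_neg hS2] at h2
      linarith
    · intro hS2
      by_contra hS1
      rw [if_neg hS1] at h1
      rw [if_pos hS2] at h2
      linarith
  · constructor
    · intro h; exact absurd (hS h) hHA
    · intro h; exact absurd (hS' h) hHA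

lemma cell_open (S : Finset (Set (Fin ℓ → ℝ))) : IsOpen (zCell f c Set.univ A S) := by
  unfold zCell
  exact isOpen_univ.inter (isOpen_biInter_finset fun H _ => zSide_isOpen f c S H)

lemma cell_convex (S : Finset (Set (Fin ℓ → ℝ))) : Convex ℝ (zCell f c Set.univ A S) := by
  unfold zCell
  exact convex_univ.inter (convex_iInter₂ fun H _ => zSide_convex f c S H)

lemma componentIn_eq_cell (hfc : ∀ H ∈ A, H = {x | f H x = c H}) {x : Fin ℓ → ℝ}
    (hx : x ∈ M) : connectedComponentIn M x
      = zCell f c Set.univ A (A.filter fun H => c H < f H x) := by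
  apply Set.Subset.antisymm
  · set u := zCell f c Set.univ A (A.filter fun H => c H < f H x) with hu
    set v := ⋃ S ∈ (A.powerset.erase (A.filter fun H => c H < f H x)),
      zCell f c Set.univ A S with hv
    have hvopen : IsOpen v := isOpen_biUnion fun S _ => cell_open f c S
    have huv : ¬ (connectedComponentIn M x ∩ (u ∩ v)).Nonempty := by
      rintro ⟨z, -, hzu, hzv⟩
      obtain ⟨S, hSmem, hzS⟩ := Set.mem_iUnion₂.mp hzv
      obtain ⟨hSne, hSP⟩ := Finset.mem_erase.mp hSmem
      exact hSne (cell_eq_of_mem f c (Finset.mem_powerset.mp hSP)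
        (Finset.filter_subset _ _) hzS hzu)
    have hTsub : connectedComponentIn M x ⊆ u ∪ v := by
      intro y hy
      have hyM := connectedComponentIn_subset M x hy
      have hyc : y ∈ zCell f c Set.univ A (A.filter fun H => c H < f H y) :=
        mem_cell_of_mem_M f c hfc hyM
      by_cases h : (A.filter fun H => c H < f H y) = (A.filter fun H => c H < f H x)
      · left; rw [hu, ← h]; exact hyc
      · right
        rw [hv]
        exact Set.mem_biUnion (Finset.mem_erase.mpr
          ⟨h, Finset.mem_powerset.mpr (Finset.filter_subset _ _)⟩) hyc
    by_contra hnot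
    rw [Set.not_subset] at hnot
    obtain ⟨y, hyT, hyu⟩ := hnot
    have hyv : y ∈ v := (hTsub hyT).resolve_left hyu
    have hpre : IsPreconnected (connectedComponentIn M x) := isPreconnected_connectedComponentIn
    have hxu : x ∈ u := mem_cell_of_mem_M f c hfc hx
    have := hpre u v (cell_open f c _) hvopen hTsub
      ⟨x, mem_connectedComponentIn hx, hxu⟩ ⟨y, hyT, hyv⟩
    exact huv this
  · exact (cell_convex f c _).isPreconnected.subset_connectedComponentIn
      (mem_cell_of_mem_M f c hfc hx) (cell_subset_M f c hfc _)

lemma chamber_set_eq (hfc : ∀ H ∈ A, H = {x | f H x = c H}) :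
    {C : Set (Fin ℓ → ℝ) | IsChamberIn Set.univ A C} =
      ↑((A.powerset.filter fun S => (zCell f c Set.univ A S).Nonempty).image
        (zCell f c Set.univ A)) := by
  ext C
  simp only [Set.mem_setOf_eq, Finset.coe_image, Set.mem_image, Finset.mem_coe,
    Finset.mem_filter]
  constructor
  · rintro ⟨x, hxM, rfl⟩
    refine ⟨A.filter fun H => c H < f H x,
      ⟨Finset.mem_powerset.mpr (Finset.filter_subset _ _),
        ⟨x, mem_cell_of_mem_M f c hfc hxM⟩⟩, ?_⟩
    exact (componentIn_eq_cell f c hfc hxM).symm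
  · rintro ⟨S, ⟨hSP, hSne⟩, rfl⟩
    obtain ⟨x, hxS⟩ := hSne
    have hxM : x ∈ M := cell_subset_M f c hfc S hxS
    refine ⟨x, hxM, ?_⟩
    rw [componentIn_eq_cell f c hfc hxM,
      cell_eq_of_mem f c (Finset.filter_subset _ _) (Finset.mem_powerset.mp hSP)
        (mem_cell_of_mem_M f c hfc hxM) hxS]

lemma chamber_count (hfc : ∀ H ∈ A, H = {x | f H x = c H}) :
    Nat.card {C : Set (Fin ℓ → ℝ) // IsChamberIn Set.univ A C} = zN f c Set.univ A := by
  have h0 : Nat.card {C : Set (Fin ℓ → ℝ) // IsChamberIn Set.univ A C}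
      = ({C : Set (Fin ℓ → ℝ) | IsChamberIn Set.univ A C}).ncard := Nat.card_coe_set_eq _
  rw [h0, chamber_set_eq f c hfc, Set.ncard_coe_finset]
  unfold zN
  apply Finset.card_image_of_injOn
  intro S hS S' hS' hSS'
  rw [Finset.mem_coe, Finset.mem_filter] at hS hS'
  obtain ⟨x, hx⟩ := hS.2
  exact cell_eq_of_mem f c (Finset.mem_powerset.mp hS.1) (Finset.mem_powerset.mp hS'.1)
    hx (hSS' ▸ hx)

end Chambers

section Final
variable {ℓ : ℕ}

lemma mobius_sum_eq_zZ {A : Finset (Set (Fin ℓ → ℝ))} (hA : ∀ H ∈ A, IsHyperplane ℝ H)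
    (μ : Set (Fin ℓ → ℝ) → ℤ) (hμ : IsMobiusIn Set.univ A μ) :
    (∑ X ∈ interPosetIn Set.univ A, μ X * (-1 : ℤ) ^ rkIn ℝ Set.univ X)
      = zZ Set.univ A := by
  have hstep : ∑ X ∈ interPosetIn Set.univ A, μ X * (-1 : ℤ) ^ rkIn ℝ Set.univ X
      = ∑ X ∈ interPosetIn Set.univ A, zg A X * (-1 : ℤ) ^ rkIn ℝ Set.univ X :=
    Finset.sum_congr rfl (fun X hX => by rw [mobius_unique hA μ hμ X hX])
  rw [hstep]
  set P : Finset (Finset (Set (Fin ℓ → ℝ))) :=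
    A.powerset.filter (fun S => (Set.univ ∩ ⋂ H ∈ S, H).Nonempty) with hP
  have hmaps : ∀ S ∈ P, (Set.univ ∩ ⋂ H ∈ S, H) ∈ interPosetIn Set.univ A := by
    intro S hS
    rw [hP, Finset.mem_filter] at hS
    exact mem_interPoset_iff.mpr ⟨⟨S, hS.1, rfl⟩, hS.2⟩
  have hfib := Finset.sum_fiberwise_of_maps_to hmaps
    (fun S => (-1 : ℤ) ^ (S.card + rkIn ℝ Set.univ (Set.univ ∩ ⋂ H ∈ S, H)))
  have hinner : ∀ X ∈ interPosetIn Set.univ A,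
      (∑ S ∈ P.filter fun S => (Set.univ ∩ ⋂ H ∈ S, H) = X,
        (-1 : ℤ) ^ (S.card + rkIn ℝ Set.univ (Set.univ ∩ ⋂ H ∈ S, H)))
      = zg A X * (-1 : ℤ) ^ rkIn ℝ Set.univ X := by
    intro X hX
    have hXne := interPoset_nonempty hX
    have hfe : P.filter (fun S => (Set.univ ∩ ⋂ H ∈ S, H) = X)
        = A.powerset.filter (fun S => Set.univ ∩ ⋂ H ∈ S, H = X) := by
      rw [hP, Finset.filter_filter]
      apply Finset.filter_congr
      intro S _
      constructor
      · exact fun h => h.2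
      · exact fun h => ⟨by rw [h]; exact hXne, h⟩
    have hterm : ∀ S ∈ P.filter (fun S => (Set.univ ∩ ⋂ H ∈ S, H) = X),
        (-1 : ℤ) ^ (S.card + rkIn ℝ Set.univ (Set.univ ∩ ⋂ H ∈ S, H))
        = (-1 : ℤ) ^ S.card * (-1 : ℤ) ^ rkIn ℝ Set.univ X := by
      intro S hS
      have := (Finset.mem_filter.mp hS).2
      rw [this, pow_add]
    rw [Finset.sum_congr rfl hterm, ← Finset.sum_mul, hfe]
    rfl
  have hz : zZ Set.univ A
      = ∑ S ∈ P, (-1 : ℤ) ^ (S.card + rkIn ℝ Set.univ (Set.univ ∩ ⋂ H ∈ S, H)) := by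
    rw [hP]
    rfl
  rw [hz, ← hfib]
  exact (Finset.sum_congr rfl hinner).symm

end Final

/-- For an essential finite arrangement of affine hyperplanes in `ℝ^ℓ`,
the number of chambers equals `π(A,1) = ∑_{X ∈ L(A)} μ(X) (-1)^{r(X)}`. -/
theorem number_of_chambers {ℓ : ℕ} (A : Finset (Set (Fin ℓ → ℝ)))
    (hA : ∀ H ∈ A, IsHyperplane ℝ H)
    (hess : ∃ X ∈ interPosetIn Set.univ A, rkIn ℝ Set.univ X = ℓ)
    (μ : Set (Fin ℓ → ℝ) → ℤ) (hμ : IsMobiusIn Set.univ A μ) :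
    (Nat.card {C : Set (Fin ℓ → ℝ) // IsChamberIn Set.univ A C} : ℤ)
      = ∑ X ∈ interPosetIn Set.univ A, μ X * (-1 : ℤ) ^ rkIn ℝ Set.univ X := by
  classical
  set f : Set (Fin ℓ → ℝ) → ((Fin ℓ → ℝ) →ₗ[ℝ] ℝ) :=
    fun H => if h : IsHyperplane ℝ H then h.choose else 0 with hf
  set c : Set (Fin ℓ → ℝ) → ℝ :=
    fun H => if h : IsHyperplane ℝ H then h.choose_spec.choose else 0 with hc
  have hfc : ∀ H ∈ A, H = {x | f H x = c H} := by
    intro H hH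
    have h := hA H hH
    simp only [hf, hc, dif_pos h]
    exact h.choose_spec.choose_spec.2
  have h1 := chamber_count f c (A := A) hfc
  have h2 : (zN f c Set.univ A : ℤ) = zZ Set.univ A :=
    zN_eq_zZ f c A hfc Set.univ ⟨⊤, by simp⟩ ⟨0, trivial⟩
  have h3 := mobius_sum_eq_zZ hA μ hμ
  rw [h1, h2, h3]
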